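/- Let I = [a,b], let A : ℝ → M₂(ℍ) be continuous on I, and let x₁, x₂ be solutions of x' = A(t)x on I with Wronskian W(t) = ddet M(t), where M(t) has columns x₁(t), x₂(t). If W(t₀) = 0 for some t₀ ∈ I, then x₁ and x₂ are right linearly dependent on I: there exist quaternions q₁, q₂, not both zero, with x₁(t)q₁ + x₂(t)q₂ = 0 for all t ∈ I. -/

import Mathlib

open Matrix

set_option maxHeartbeats 4000000 in
private lemma quat_key1 (p q r s : Quaternion ℝ) :
    (r * (star q * q) - s * (star q * p)) * star (r * (star q * q) - s * (star q * p)) =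
    (star q * q) * ((p * star p + q * star q) * (r * star r + s * star s) -
      (p * star r + q * star s) * (r * star p + s * star q)) := by
  ext <;> simp [Quaternion.re_mul, Quaternion.imI_mul, Quaternion.imJ_mul, Quaternion.imK_mul] <;>
    ring

set_option maxHeartbeats 4000000 in
private lemma quat_key2 (p q r s : Quaternion ℝ) :
    (p * (star s * s) - q * (star s * r)) * star (p * (star s * s) - q * (star s * r)) =
    (star s * s) * ((p * star p + q * star q) * (r * star r + s * star s) -
      (p * star r + q * star s) * (r * star p + s * star q)) := by
  ext <;> simp [Quaternion.re_mul, Quaternion.imI_mul, Quaternion.imJ_mul, Quaternion.imK_mul] <;>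
    ring

private lemma quat_dep (p q r s : Quaternion ℝ)
    (hD : (p * star p + q * star q) * (r * star r + s * star s) -
      (p * star r + q * star s) * (r * star p + s * star q) = 0) :
    ∃ q₁ q₂ : Quaternion ℝ, ¬(q₁ = 0 ∧ q₂ = 0) ∧
      p * q₁ + q * q₂ = 0 ∧ r * q₁ + s * q₂ = 0 := by
  by_cases hq : q = 0
  · by_cases hs : s = 0
    · exact ⟨0, 1, by simp, by simp [hq], by simp [hs]⟩
    · refine ⟨star s * s, -(star s * r), ?_, ?_, ?_⟩
      · rintro ⟨h, -⟩
        rcases mul_eq_zero.mp h with h | h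
        exacts [hs (star_eq_zero.mp h), hs h]
      · have key2 := quat_key2 p q r s
        rw [hD, mul_zero] at key2
        have h0 : p * (star s * s) - q * (star s * r) = 0 := by
          rcases mul_eq_zero.mp key2 with h | h
          exacts [h, star_eq_zero.mp h]
        rwa [mul_neg, ← sub_eq_add_neg]
      · have h1 : r * (star s * s) = s * (star s * r) := by
          rw [Quaternion.star_mul_self, ← mul_assoc, Quaternion.self_mul_star,
            Quaternion.coe_commutes]
        rw [mul_neg, h1, ← sub_eq_add_neg, sub_self]
  · refine ⟨star q * q, -(star q * p), ?_, ?_, ?_⟩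
    · rintro ⟨h, -⟩
      rcases mul_eq_zero.mp h with h | h
      exacts [hq (star_eq_zero.mp h), hq h]
    · have h1 : p * (star q * q) = q * (star q * p) := by
        rw [Quaternion.star_mul_self, ← mul_assoc, Quaternion.self_mul_star,
          Quaternion.coe_commutes]
      rw [mul_neg, h1, ← sub_eq_add_neg, sub_self]
    · have key1 := quat_key1 p q r s
      rw [hD, mul_zero] at key1
      have h0 : r * (star q * q) - s * (star q * p) = 0 := by
        rcases mul_eq_zero.mp key1 with h | h
        exacts [h, star_eq_zero.mp h]
      rwa [mul_neg, ← sub_eq_add_neg]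

private lemma ode_zero (a b : ℝ) (A : ℝ → Matrix (Fin 2) (Fin 2) (Quaternion ℝ))
    (hA : ContinuousOn A (Set.Icc a b))
    (y : ℝ → Fin 2 → Quaternion ℝ)
    (hy : ∀ t ∈ Set.Icc a b, HasDerivAt y ((A t).mulVec (y t)) t)
    (t₀ : ℝ) (ht₀ : t₀ ∈ Set.Icc a b) (h0 : y t₀ = 0) :
    ∀ t ∈ Set.Icc a b, y t = 0 := by
  have hab : a ≤ b := le_trans ht₀.1 ht₀.2
  set c : ℝ → ℝ := fun t => max a (min t b) with hc
  have hcmem : ∀ t, c t ∈ Set.Icc a b := fun t =>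
    ⟨le_max_left _ _, max_le hab (min_le_right _ _)⟩
  have hceq : ∀ t ∈ Set.Icc a b, c t = t := fun t ht => by
    simp [hc, min_eq_left ht.2, max_eq_right ht.1]
  set φ : ℝ → ℝ := fun t => ‖A t 0 0‖ + ‖A t 0 1‖ + ‖A t 1 0‖ + ‖A t 1 1‖ with hφ
  have hφc : ContinuousOn φ (Set.Icc a b) := by
    apply ContinuousOn.add; apply ContinuousOn.add; apply ContinuousOn.add
    all_goals
      exact (((continuous_apply _).comp (continuous_apply _)).comp_continuousOn hA).norm
  obtain ⟨C, hC⟩ := isCompact_Icc.exists_bound_of_continuousOn hφc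
  have hφle : ∀ t ∈ Set.Icc a b, φ t ≤ C := fun t ht =>
    le_trans (le_abs_self _) (by simpa [Real.norm_eq_abs] using hC t ht)
  set K : NNReal := ⟨max C 0, le_max_right _ _⟩ with hK
  set v : ℝ → (Fin 2 → Quaternion ℝ) → (Fin 2 → Quaternion ℝ) :=
    fun t x => (A (c t)).mulVec x with hv
  have hvK : ∀ t, LipschitzWith K (v t) := by
    intro t
    apply LipschitzWith.of_dist_le_mul
    intro x z
    rw [dist_eq_norm, dist_eq_norm, hv]
    simp only
    rw [← Matrix.mulVec_sub]
    set M := A (c t)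
    set u := x - z
    have hKnn : (0:ℝ) ≤ K := K.2
    rw [pi_norm_le_iff_of_nonneg (mul_nonneg hKnn (norm_nonneg _))]
    intro i
    have hmv : M.mulVec u i = M i 0 * u 0 + M i 1 * u 1 := by
      simp [Matrix.mulVec, dotProduct, Fin.sum_univ_two]
    rw [hmv]
    have h1 : ‖M i 0 * u 0 + M i 1 * u 1‖ ≤ (‖M i 0‖ + ‖M i 1‖) * ‖u‖ := by
      calc ‖M i 0 * u 0 + M i 1 * u 1‖ ≤ ‖M i 0 * u 0‖ + ‖M i 1 * u 1‖ := norm_add_le _ _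
        _ = ‖M i 0‖ * ‖u 0‖ + ‖M i 1‖ * ‖u 1‖ := by rw [norm_mul, norm_mul]
        _ ≤ ‖M i 0‖ * ‖u‖ + ‖M i 1‖ * ‖u‖ := by
            gcongr <;> exact norm_le_pi_norm u _
        _ = (‖M i 0‖ + ‖M i 1‖) * ‖u‖ := by ring
    refine h1.trans ?_
    have h2 : ‖M i 0‖ + ‖M i 1‖ ≤ φ (c t) := by
      have h00 : (0:ℝ) ≤ ‖A (c t) 0 0‖ := norm_nonneg _
      have h01 : (0:ℝ) ≤ ‖A (c t) 0 1‖ := norm_nonneg _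
      have h10 : (0:ℝ) ≤ ‖A (c t) 1 0‖ := norm_nonneg _
      have h11 : (0:ℝ) ≤ ‖A (c t) 1 1‖ := norm_nonneg _
      fin_cases i <;> simp [hφ, M] <;> linarith
    have h3 : φ (c t) ≤ K := le_trans (hφle _ (hcmem t)) (le_max_left _ _)
    exact mul_le_mul_of_nonneg_right (le_trans h2 h3) (norm_nonneg _)
  have hlip : ∀ t, LipschitzOnWith K (v t) (Set.univ) := fun t => (hvK t).lipschitzOnWith
  have hycont : ContinuousOn y (Set.Icc a b) := fun t ht =>
    (hy t ht).continuousAt.continuousWithinAt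
  have hgcont : ContinuousOn (fun _ : ℝ => (0 : Fin 2 → Quaternion ℝ)) (Set.Icc a b) :=
    continuousOn_const
  have hg' : ∀ (S : ℝ → Set ℝ) t, HasDerivWithinAt (fun _ : ℝ => (0 : Fin 2 → Quaternion ℝ))
      (v t ((fun _ => (0 : Fin 2 → Quaternion ℝ)) t)) (S t) t := by
    intro S t
    have : v t 0 = 0 := by simp [hv]
    rw [this]
    exact hasDerivWithinAt_const _ _ _
  intro t ht
  rcases le_total t t₀ with h | h
  · have key : Set.EqOn y (fun _ => 0) (Set.Icc a t₀) := by
      apply ODE_solution_unique_of_mem_Icc_left (fun t _ => hlip t)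
        (hycont.mono (Set.Icc_subset_Icc_right ht₀.2))
      · intro τ hτ
        have hτm : τ ∈ Set.Icc a b := ⟨le_of_lt hτ.1, le_trans hτ.2 ht₀.2⟩
        have := (hy τ hτm).hasDerivWithinAt (s := Set.Iic τ)
        rwa [show v τ (y τ) = (A τ).mulVec (y τ) by rw [hv]; simp [hceq τ hτm]]
      · exact fun _ _ => trivial
      · exact hgcont.mono (Set.Icc_subset_Icc_right ht₀.2)
      · exact fun τ _ => hg' _ τ
      · exact fun _ _ => trivial
      · simpa using h0
    exact key ⟨ht.1, h⟩
  · have key : Set.EqOn y (fun _ => 0) (Set.Icc t₀ b) := by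
      apply ODE_solution_unique_of_mem_Icc_right (fun t _ => hlip t)
        (hycont.mono (Set.Icc_subset_Icc_left ht₀.1))
      · intro τ hτ
        have hτm : τ ∈ Set.Icc a b := ⟨le_trans ht₀.1 hτ.1, le_of_lt hτ.2⟩
        have := (hy τ hτm).hasDerivWithinAt (s := Set.Ici τ)
        rwa [show v τ (y τ) = (A τ).mulVec (y τ) by rw [hv]; simp [hceq τ hτm]]
      · exact fun _ _ => trivial
      · exact hgcont.mono (Set.Icc_subset_Icc_left ht₀.1)
      · exact fun τ _ => hg' _ τ
      · exact fun _ _ => trivial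
      · simpa using h0
    exact key ⟨h, ht.2⟩

/-- The double determinant of a 2×2 quaternion matrix. -/
noncomputable def ddet (M : Matrix (Fin 2) (Fin 2) (Quaternion ℝ)) : Quaternion ℝ :=
  (M * Mᴴ) 0 0 * (M * Mᴴ) 1 1 - (M * Mᴴ) 0 1 * (M * Mᴴ) 1 0

/-- If the Wronskian of two solutions of `x' = A(t) x` on `I = [a,b]` vanishes at some
`t₀ ∈ I`, then the two solutions are right linearly dependent on `I`. -/
theorem right_dep_of_wronskian_eq_zero (a b : ℝ)
    (A : ℝ → Matrix (Fin 2) (Fin 2) (Quaternion ℝ))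
    (hA : ContinuousOn A (Set.Icc a b))
    (x₁ x₂ : ℝ → Fin 2 → Quaternion ℝ)
    (hx₁ : ∀ t ∈ Set.Icc a b, HasDerivAt x₁ ((A t).mulVec (x₁ t)) t)
    (hx₂ : ∀ t ∈ Set.Icc a b, HasDerivAt x₂ ((A t).mulVec (x₂ t)) t)
    (t₀ : ℝ) (ht₀ : t₀ ∈ Set.Icc a b)
    (hW : ddet (Matrix.of fun i j => ![x₁ t₀, x₂ t₀] j i) = 0) :
    ∃ q₁ q₂ : Quaternion ℝ, ¬(q₁ = 0 ∧ q₂ = 0) ∧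
      ∀ t ∈ Set.Icc a b, (fun i => x₁ t i * q₁ + x₂ t i * q₂) = (0 : Fin 2 → Quaternion ℝ) := by
  have hD : (x₁ t₀ 0 * star (x₁ t₀ 0) + x₂ t₀ 0 * star (x₂ t₀ 0)) *
        (x₁ t₀ 1 * star (x₁ t₀ 1) + x₂ t₀ 1 * star (x₂ t₀ 1)) -
      (x₁ t₀ 0 * star (x₁ t₀ 1) + x₂ t₀ 0 * star (x₂ t₀ 1)) *
        (x₁ t₀ 1 * star (x₁ t₀ 0) + x₂ t₀ 1 * star (x₂ t₀ 0)) = 0 := by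
    simpa [ddet, Matrix.mul_apply, Fin.sum_univ_two, Matrix.conjTranspose_apply] using hW
  obtain ⟨q₁, q₂, hne, h0, h1⟩ :=
    quat_dep (x₁ t₀ 0) (x₂ t₀ 0) (x₁ t₀ 1) (x₂ t₀ 1) hD
  refine ⟨q₁, q₂, hne, ?_⟩
  set y : ℝ → Fin 2 → Quaternion ℝ := fun t i => x₁ t i * q₁ + x₂ t i * q₂ with hy
  have hyderiv : ∀ t ∈ Set.Icc a b, HasDerivAt y ((A t).mulVec (y t)) t := by
    intro t ht
    have h1' := hasDerivAt_pi.mp (hx₁ t ht)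
    have h2' := hasDerivAt_pi.mp (hx₂ t ht)
    rw [hasDerivAt_pi]
    intro i
    have hd := ((h1' i).mul_const q₁).add ((h2' i).mul_const q₂)
    have heq : (A t).mulVec (y t) i =
        (A t).mulVec (x₁ t) i * q₁ + (A t).mulVec (x₂ t) i * q₂ := by
      simp only [Matrix.mulVec, dotProduct, Fin.sum_univ_two, hy]
      noncomm_ring
    rw [heq]
    exact hd
  have hy0 : y t₀ = 0 := by
    funext i
    fin_cases i
    · exact h0
    · exact h1
  intro t ht
  exact ode_zero a b A hA y hyderiv t₀ ht₀ hy0 t ht
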